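/- Let Φ = (Φ_c)_{c∈C} and Ψ = (Ψ_d)_{d∈C°} be smooth solutions of bbGKZ(C,0) and bbGKZ(C°,0) for v_1=(0,1), v_2=(1,1), v_3=(3,1) in N = ℤ². Then the function ⟨Φ,Ψ⟩ = x_1x_2(Φ_{(0,0)}Ψ_{(1,2)} − Φ_{(0,1)}Ψ_{(1,1)}) + 9x_1x_3(Φ_{(0,0)}Ψ_{(3,2)} − Φ_{(1,1)}Ψ_{(2,1)} − Φ_{(2,1)}Ψ_{(1,1)}) + x_2x_3(4Φ_{(0,0)}Ψ_{(4,2)} − 6Φ_{(2,1)}Ψ_{(2,1)} − 4Φ_{(3,1)}Ψ_{(1,1)}) has vanishing partial derivative with respect to x_2. -/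

import Mathlib

/-- Lattice points of the cone `C` generated by `v₁=(0,1)`, `v₂=(1,1)`, `v₃=(3,1)`. -/
def inConeC (a b : ℤ) : Prop := 0 ≤ a ∧ a ≤ 3 * b

/-- Lattice points of the interior `C°`. -/
def inConeCint (a b : ℤ) : Prop := 0 < a ∧ a < 3 * b

/-- for smooth solutions `Φ` of `bbGKZ(C,0)` and `Ψ` of `bbGKZ(C°,0)` for
`v₁=(0,1)`, `v₂=(1,1)`, `v₃=(3,1)`, the function
`⟨Φ,Ψ⟩ = x₁x₂(Φ₍₀,₀₎Ψ₍₁,₂₎ − Φ₍₀,₁₎Ψ₍₁,₁₎) + 9x₁x₃(Φ₍₀,₀₎Ψ₍₃,₂₎ − Φ₍₁,₁₎Ψ₍₂,₁₎ − Φ₍₂,₁₎Ψ₍₁,₁₎)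
 + x₂x₃(4Φ₍₀,₀₎Ψ₍₄,₂₎ − 6Φ₍₂,₁₎Ψ₍₂,₁₎ − 4Φ₍₃,₁₎Ψ₍₁,₁₎)` has vanishing partial derivative
with respect to `x₂`. The hypotheses are `∂ᵢΦ_c = Φ_{c+vᵢ}` for `c ∈ C`, `∂ᵢΨ_d = Ψ_{d+vᵢ}`
for `d ∈ C°`, and the Euler-type equations (with derivatives substituted)
`∑ᵢ ⟨m,vᵢ⟩xᵢΦ_{c+vᵢ} + ⟨m,c⟩Φ_c = 0`, and similarly for `Ψ`. -/
theorem stmt12 (Φ Ψ : ℤ → ℤ → ℝ → ℝ → ℝ → ℝ)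
    (hΦd1 : ∀ a b, inConeC a b → ∀ x1 x2 x3 : ℝ,
      HasDerivAt (fun t => Φ a b t x2 x3) (Φ a (b + 1) x1 x2 x3) x1)
    (hΦd2 : ∀ a b, inConeC a b → ∀ x1 x2 x3 : ℝ,
      HasDerivAt (fun t => Φ a b x1 t x3) (Φ (a + 1) (b + 1) x1 x2 x3) x2)
    (hΦd3 : ∀ a b, inConeC a b → ∀ x1 x2 x3 : ℝ,
      HasDerivAt (fun t => Φ a b x1 x2 t) (Φ (a + 3) (b + 1) x1 x2 x3) x3)
    (hΦE : ∀ m1 m2 a b, inConeC a b → ∀ x1 x2 x3 : ℝ,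
      ((m2 : ℤ) : ℝ) * x1 * Φ a (b + 1) x1 x2 x3 +
      ((m1 + m2 : ℤ) : ℝ) * x2 * Φ (a + 1) (b + 1) x1 x2 x3 +
      ((3 * m1 + m2 : ℤ) : ℝ) * x3 * Φ (a + 3) (b + 1) x1 x2 x3 +
      ((m1 * a + m2 * b : ℤ) : ℝ) * Φ a b x1 x2 x3 = 0)
    (hΨd1 : ∀ a b, inConeCint a b → ∀ x1 x2 x3 : ℝ,
      HasDerivAt (fun t => Ψ a b t x2 x3) (Ψ a (b + 1) x1 x2 x3) x1)
    (hΨd2 : ∀ a b, inConeCint a b → ∀ x1 x2 x3 : ℝ,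
      HasDerivAt (fun t => Ψ a b x1 t x3) (Ψ (a + 1) (b + 1) x1 x2 x3) x2)
    (hΨd3 : ∀ a b, inConeCint a b → ∀ x1 x2 x3 : ℝ,
      HasDerivAt (fun t => Ψ a b x1 x2 t) (Ψ (a + 3) (b + 1) x1 x2 x3) x3)
    (hΨE : ∀ m1 m2 a b, inConeCint a b → ∀ x1 x2 x3 : ℝ,
      ((m2 : ℤ) : ℝ) * x1 * Ψ a (b + 1) x1 x2 x3 +
      ((m1 + m2 : ℤ) : ℝ) * x2 * Ψ (a + 1) (b + 1) x1 x2 x3 +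
      ((3 * m1 + m2 : ℤ) : ℝ) * x3 * Ψ (a + 3) (b + 1) x1 x2 x3 +
      ((m1 * a + m2 * b : ℤ) : ℝ) * Ψ a b x1 x2 x3 = 0) :
    ∀ x1 x2 x3 : ℝ,
      HasDerivAt
        (fun t =>
          x1 * t * (Φ 0 0 x1 t x3 * Ψ 1 2 x1 t x3 - Φ 0 1 x1 t x3 * Ψ 1 1 x1 t x3) +
          9 * x1 * x3 * (Φ 0 0 x1 t x3 * Ψ 3 2 x1 t x3 - Φ 1 1 x1 t x3 * Ψ 2 1 x1 t x3 -
            Φ 2 1 x1 t x3 * Ψ 1 1 x1 t x3) +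
          t * x3 * (4 * Φ 0 0 x1 t x3 * Ψ 4 2 x1 t x3 - 6 * Φ 2 1 x1 t x3 * Ψ 2 1 x1 t x3 -
            4 * Φ 3 1 x1 t x3 * Ψ 1 1 x1 t x3))
        0 x2 := by
  intro x1 x2 x3
  have hF00 : HasDerivAt (fun t => Φ 0 0 x1 t x3) (Φ 1 1 x1 x2 x3) x2 := by
    simpa using hΦd2 0 0 (by norm_num [inConeC]) x1 x2 x3
  have hF01 : HasDerivAt (fun t => Φ 0 1 x1 t x3) (Φ 1 2 x1 x2 x3) x2 := by
    simpa using hΦd2 0 1 (by norm_num [inConeC]) x1 x2 x3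
  have hF11 : HasDerivAt (fun t => Φ 1 1 x1 t x3) (Φ 2 2 x1 x2 x3) x2 := by
    simpa using hΦd2 1 1 (by norm_num [inConeC]) x1 x2 x3
  have hF21 : HasDerivAt (fun t => Φ 2 1 x1 t x3) (Φ 3 2 x1 x2 x3) x2 := by
    simpa using hΦd2 2 1 (by norm_num [inConeC]) x1 x2 x3
  have hF31 : HasDerivAt (fun t => Φ 3 1 x1 t x3) (Φ 4 2 x1 x2 x3) x2 := by
    simpa using hΦd2 3 1 (by norm_num [inConeC]) x1 x2 x3
  have hP11 : HasDerivAt (fun t => Ψ 1 1 x1 t x3) (Ψ 2 2 x1 x2 x3) x2 := by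
    simpa using hΨd2 1 1 (by norm_num [inConeCint]) x1 x2 x3
  have hP12 : HasDerivAt (fun t => Ψ 1 2 x1 t x3) (Ψ 2 3 x1 x2 x3) x2 := by
    simpa using hΨd2 1 2 (by norm_num [inConeCint]) x1 x2 x3
  have hP21 : HasDerivAt (fun t => Ψ 2 1 x1 t x3) (Ψ 3 2 x1 x2 x3) x2 := by
    simpa using hΨd2 2 1 (by norm_num [inConeCint]) x1 x2 x3
  have hP32 : HasDerivAt (fun t => Ψ 3 2 x1 t x3) (Ψ 4 3 x1 x2 x3) x2 := by
    simpa using hΨd2 3 2 (by norm_num [inConeCint]) x1 x2 x3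
  have hP42 : HasDerivAt (fun t => Ψ 4 2 x1 t x3) (Ψ 5 3 x1 x2 x3) x2 := by
    simpa using hΨd2 4 2 (by norm_num [inConeCint]) x1 x2 x3
  have H := ((((hasDerivAt_id x2).const_mul x1).mul
        ((hF00.mul hP12).sub (hF01.mul hP11))).add
      ((((hF00.mul hP32).sub (hF11.mul hP21)).sub (hF21.mul hP11)).const_mul
        (9 * x1 * x3))).add
    (((hasDerivAt_id x2).mul_const x3).mul
      ((((hF00.const_mul 4).mul hP42).sub ((hF21.const_mul 6).mul hP21)).sub
        ((hF31.const_mul 4).mul hP11)))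
  convert H using 1
  · rfl
  · rfl
  · rfl
  simp only [id_eq, Pi.mul_apply, Pi.sub_apply]
  have c1 := hΦE 1 0 0 0 (by norm_num [inConeC]) x1 x2 x3
  have c2 := hΦE 0 1 0 0 (by norm_num [inConeC]) x1 x2 x3
  have c3 := hΦE 1 0 0 1 (by norm_num [inConeC]) x1 x2 x3
  have c4 := hΦE 1 0 1 1 (by norm_num [inConeC]) x1 x2 x3
  have c5 := hΦE 0 1 1 1 (by norm_num [inConeC]) x1 x2 x3
  have c6 := hΦE 1 0 2 1 (by norm_num [inConeC]) x1 x2 x3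
  have c7 := hΦE 0 1 2 1 (by norm_num [inConeC]) x1 x2 x3
  have s1 := hΨE 1 0 1 1 (by norm_num [inConeCint]) x1 x2 x3
  have s2 := hΨE 0 1 1 1 (by norm_num [inConeCint]) x1 x2 x3
  have s3 := hΨE 1 0 2 1 (by norm_num [inConeCint]) x1 x2 x3
  have s4 := hΨE 0 1 2 1 (by norm_num [inConeCint]) x1 x2 x3
  have s5 := hΨE 1 0 1 2 (by norm_num [inConeCint]) x1 x2 x3
  have s6 := hΨE 1 0 2 2 (by norm_num [inConeCint]) x1 x2 x3
  have s7 := hΨE 0 1 2 2 (by norm_num [inConeCint]) x1 x2 x3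
  norm_num at c1 c2 c3 c4 c5 c6 c7 s1 s2 s3 s4 s5 s6 s7
  linear_combination
    (2 * Ψ 1 1 x1 x2 x3 + (1/2) * x1 * Ψ 1 2 x1 x2 x3 + 2 * x2 * Ψ 2 2 x1 x2 x3
      + 2 * x3 * Ψ 4 2 x1 x2 x3) * c1 +
    (-2 * Ψ 1 1 x1 x2 x3 - (3/2) * x1 * Ψ 1 2 x1 x2 x3 - 2 * x2 * Ψ 2 2 x1 x2 x3
      - 6 * x3 * Ψ 4 2 x1 x2 x3) * c2 +
    (3 * x1 * Ψ 1 1 x1 x2 x3) * c3 +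
    (2 * x2 * Ψ 1 1 x1 x2 x3) * c4 +
    (-2 * x2 * Ψ 1 1 x1 x2 x3) * c5 +
    (-3 * x3 * Ψ 2 1 x1 x2 x3) * c6 +
    (9 * x3 * Ψ 2 1 x1 x2 x3) * c7 +
    (-2 * Φ 0 0 x1 x2 x3 + (3/2) * x1 * Φ 0 1 x1 x2 x3) * s1 +
    (2 * Φ 0 0 x1 x2 x3 + (3/2) * x1 * Φ 0 1 x1 x2 x3) * s2 +
    (-3 * x3 * Φ 2 1 x1 x2 x3) * s3 +
    (9 * x3 * Φ 2 1 x1 x2 x3) * s4 +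
    (-3 * x1 * Φ 0 0 x1 x2 x3) * s5 +
    (-2 * x2 * Φ 0 0 x1 x2 x3) * s6 +
    (2 * x2 * Φ 0 0 x1 x2 x3) * s7
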